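/- Let F be a field of characteristic 2, let q be a totally singular quadratic form over F on a finite-dimensional F-vector space which is not a zero form (i.e. q(x) ≠ 0 for some x), let L/F be a finite field extension, and let λ ∈ L* be such that q_L ≅ λ·q_L over L. Then F(λ)/F is separable or L/F(λ) is not separable. -/

import Mathlib

open scoped TensorProduct

/-- `Q` is the scalar extension of the quadratic form `q` to `L`: it satisfies
`Q (c ⊗ x) = c² ⬝ q x` and its polar form is the base change of the polar form of `q`
(a bilinear form is determined by its values on pure tensors). -/
def IsScalarExt (F : Type*) {L : Type*} [Field F] [Field L] [Algebra F L]
    {V : Type*} [AddCommGroup V] [Module F V]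
    (q : QuadraticForm F V) (Q : QuadraticForm L (L ⊗[F] V)) : Prop :=
  (∀ (c : L) (x : V), Q (c ⊗ₜ[F] x) = c ^ 2 * algebraMap F L (q x)) ∧
  ∀ (c d : L) (x y : V),
    QuadraticMap.polar (⇑Q) (c ⊗ₜ[F] x) (d ⊗ₜ[F] y) =
      c * d * algebraMap F L (QuadraticMap.polar (⇑q) x y)

/-- if `λ ∈ L*` is a similarity factor over a finite extension `L/F` of a
nonzero totally singular quadratic form defined over `F` (char 2), then `F(λ)/F` is
separable or `L/F(λ)` is not separable. -/
theorem stmt_17 {F L : Type*} [Field F] [CharP F 2] [Field L] [Algebra F L]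
    [FiniteDimensional F L]
    {V : Type*} [AddCommGroup V] [Module F V] [FiniteDimensional F V]
    (q : QuadraticForm F V)
    (hts : ∀ x y : V, QuadraticMap.polar (⇑q) x y = 0)
    (hnz : ∃ x : V, q x ≠ 0)
    (Q : QuadraticForm L (L ⊗[F] V)) (hQ : IsScalarExt F q Q)
    (lam : L) (hlam : lam ≠ 0)
    (hsim : ∃ e : (L ⊗[F] V) ≃ₗ[L] (L ⊗[F] V), ∀ z, (lam • Q) (e z) = Q z) :
    Algebra.IsSeparable F (IntermediateField.adjoin F {lam}) ∨
      ¬ Algebra.IsSeparable (IntermediateField.adjoin F {lam}) L := by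
  by_cases hB : Algebra.IsSeparable (IntermediateField.adjoin F {lam}) L
  swap
  · exact Or.inr hB
  left
  haveI : CharP L 2 := charP_of_injective_algebraMap (algebraMap F L).injective 2
  -- Step 1: the polar form of `Q` vanishes identically.
  have hpol : ∀ z w : L ⊗[F] V, QuadraticMap.polar (⇑Q) z w = 0 := by
    intro z w
    induction z using TensorProduct.induction_on with
    | zero => exact QuadraticMap.polar_zero_left _ _
    | tmul c x =>
      induction w using TensorProduct.induction_on with
      | zero => exact QuadraticMap.polar_zero_right _ _
      | tmul d y => rw [hQ.2 c d x y, hts x y, map_zero, mul_zero]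
      | add w₁ w₂ h1 h2 => rw [QuadraticMap.polar_add_right, h1, h2, add_zero]
    | add z₁ z₂ h1 h2 => rw [QuadraticMap.polar_add_left, h1, h2, add_zero]
  have hadd : ∀ z w : L ⊗[F] V, Q (z + w) = Q z + Q w := by
    intro z w
    have := hpol z w
    rw [QuadraticMap.polar, sub_sub, sub_eq_zero] at this
    exact this
  -- Step 2: all values of `Q` lie in the subfield `R = F(L²)` of `L`.
  set R : Subfield L :=
    Subfield.closure (Set.range (algebraMap F L) ∪ Set.range (fun x : L => x ^ 2)) with hR
  have hmem : ∀ z : L ⊗[F] V, Q z ∈ R := by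
    intro z
    induction z using TensorProduct.induction_on with
    | zero => rw [map_zero]; exact zero_mem R
    | tmul c x =>
      rw [hQ.1 c x]
      exact mul_mem (Subfield.subset_closure (Or.inr ⟨c, rfl⟩))
        (Subfield.subset_closure (Or.inl ⟨q x, rfl⟩))
    | add z₁ z₂ h1 h2 => rw [hadd z₁ z₂]; exact add_mem h1 h2
  -- Step 3: `lam ∈ R`.
  have hlamR : lam ∈ R := by
    obtain ⟨e, he⟩ := hsim
    obtain ⟨x₀, hx₀⟩ := hnz
    set α : L := algebraMap F L (q x₀) with hα
    have hαne : α ≠ 0 := fun h => hx₀ ((algebraMap F L).injective (by rwa [map_zero]))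
    set w : L := Q (e ((1 : L) ⊗ₜ[F] x₀)) with hw
    have hlw : lam * w = α := by
      have := he ((1 : L) ⊗ₜ[F] x₀)
      rw [QuadraticMap.smul_apply, smul_eq_mul] at this
      rw [hw, this, hQ.1, one_pow, one_mul]
    have hwne : w ≠ 0 := by
      intro h
      rw [h, mul_zero] at hlw
      exact hαne hlw.symm
    have : lam = α * w⁻¹ := by rw [← hlw, mul_inv_cancel_right₀ hwne]
    rw [this]
    have hαR : α ∈ R := Subfield.subset_closure (Or.inl ⟨q x₀, rfl⟩)
    exact mul_mem hαR (inv_mem (hmem _))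
  -- Step 4: field-theoretic argument.
  haveI : Algebra.IsAlgebraic F L := Algebra.IsAlgebraic.of_finite F L
  set S : IntermediateField F L := separableClosure F L with hS
  set M : ℕ → IntermediateField F L :=
    fun n => IntermediateField.adjoin F ((S : Set L) ∪ {lam ^ 2 ^ n}) with hM
  have hSM : ∀ n, (S : Set L) ⊆ M n := fun n x hx =>
    IntermediateField.subset_adjoin F _ (Or.inl hx)
  have hlamM : ∀ n, lam ^ 2 ^ n ∈ M n := fun n =>
    IntermediateField.subset_adjoin F _ (Or.inr rfl)
  -- `M 0 = ⊤`
  have h0le : IntermediateField.adjoin F {lam} ≤ M 0 := by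
    rw [IntermediateField.adjoin_le_iff]
    intro x hx
    rw [Set.mem_singleton_iff] at hx
    subst hx
    have := hlamM 0
    rwa [pow_zero, pow_one] at this
  have hM0 : M 0 = ⊤ := by
    letI : Algebra (IntermediateField.adjoin F {lam}) (M 0) :=
      (IntermediateField.inclusion h0le).toAlgebra
    haveI : IsScalarTower (IntermediateField.adjoin F {lam}) (M 0) L :=
      IsScalarTower.of_algebraMap_eq (congrFun rfl)
    haveI : Algebra.IsSeparable (M 0) L :=
      Algebra.isSeparable_tower_top_of_isSeparable (IntermediateField.adjoin F {lam}) (M 0) L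
    have hSle : S ≤ M 0 := hSM 0
    letI : Algebra S (M 0) := (IntermediateField.inclusion hSle).toAlgebra
    haveI : IsScalarTower S (M 0) L := IsScalarTower.of_algebraMap_eq (congrFun rfl)
    haveI : IsPurelyInseparable S L := separableClosure.isPurelyInseparable F L
    haveI : IsPurelyInseparable (M 0) L := IsPurelyInseparable.tower_top S (M 0) L
    rw [eq_top_iff]
    intro x _
    obtain ⟨y, hy⟩ := IsPurelyInseparable.surjective_algebraMap_of_isSeparable (M 0) L x
    exact hy ▸ y.2
  -- squares drop one level
  have hsq : ∀ n, M n = ⊤ → ∀ x : L, x ^ 2 ∈ M (n + 1) := by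
    intro n htop x
    have hx : x ∈ M n := htop ▸ IntermediateField.mem_top
    induction hx using IntermediateField.adjoin_induction with
    | mem y hy =>
      rcases hy with hy | hy
      · exact hSM (n + 1) (pow_mem hy 2)
      · rw [Set.mem_singleton_iff] at hy
        subst hy
        have : (lam ^ 2 ^ n) ^ 2 = lam ^ 2 ^ (n + 1) := by
          rw [← pow_mul, ← pow_succ]
        exact this ▸ hlamM (n + 1)
    | algebraMap r => rw [← map_pow]; exact (M (n + 1)).algebraMap_mem _
    | add a b _ _ ha hb => rw [CharTwo.add_sq]; exact add_mem ha hb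
    | inv a _ ha => rw [inv_pow]; exact inv_mem ha
    | mul a b _ _ ha hb => rw [mul_pow]; exact mul_mem ha hb
  -- all `M n` equal `⊤`
  have hMtop : ∀ n, M n = ⊤ := by
    intro n
    induction n with
    | zero => exact hM0
    | succ n ih =>
      have hRle : (R : Set L) ⊆ (M (n + 1) : Set L) := by
        rw [hR]
        intro x hx
        refine Subfield.closure_le.2 ?_ hx
        rintro y (⟨r, rfl⟩ | ⟨c, rfl⟩)
        · exact (M (n + 1)).algebraMap_mem r
        · exact hsq n ih c
      have hlamM1 : lam ∈ M (n + 1) := hRle hlamR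
      rw [eq_top_iff, ← hM0, IntermediateField.adjoin_le_iff]
      rintro y (hy | hy)
      · exact hSM (n + 1) hy
      · rw [Set.mem_singleton_iff] at hy
        subst hy
        rwa [pow_zero, pow_one]
  -- conclude : `S = ⊤`
  haveI : CharP S 2 := charP_of_injective_algebraMap (algebraMap F S).injective 2
  haveI : ExpChar S 2 := ExpChar.prime Nat.prime_two
  haveI : IsPurelyInseparable S L := separableClosure.isPurelyInseparable F L
  obtain ⟨n, y, hy⟩ := IsPurelyInseparable.pow_mem S 2 lam
  have hMS : M n ≤ S := by
    rw [hM]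
    rw [IntermediateField.adjoin_le_iff]
    rintro x (hx | hx)
    · exact hx
    · rw [Set.mem_singleton_iff] at hx
      subst hx
      exact hy ▸ y.2
  have hStop : S = ⊤ := eq_top_iff.2 ((hMtop n) ▸ hMS)
  haveI : Algebra.IsSeparable F L := (separableClosure.eq_top_iff F L).1 hStop
  exact Algebra.isSeparable_tower_bot_of_isSeparable F (IntermediateField.adjoin F {lam}) L
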